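/- arXiv:1604.00753 — 3 statements merged into one kernel-verified Lean document; each statement's English description precedes it below -/
import Mathlib

section
/- For every positive integer n, the series ∑_{m=1, m≠n}^∞ 1/(m² − n²) converges and equals 3/(4n²). -/
open scoped BigOperators
open Filter Finset Topology

/-- For every positive integer `n`, the series `∑_{m ≥ 1, m ≠ n} 1/(m² − n²)`
converges and its sum equals `3/(4n²)`. -/
theorem sum_one_div_sq_sub_sq (n : ℕ) (hn : 0 < n) :
    HasSum (fun m : ℕ => if m = 0 ∨ m = n then 0 else 1 / ((m : ℝ) ^ 2 - (n : ℝ) ^ 2))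
      (3 / (4 * (n : ℝ) ^ 2)) := by
  have hn0 : (n : ℝ) ≠ 0 := Nat.cast_ne_zero.mpr hn.ne'
  have hnpos : (0:ℝ) < n := Nat.cast_pos.mpr hn
  set f : ℕ → ℝ := fun m => if m = 0 ∨ m = n then 0 else 1 / ((m : ℝ) ^ 2 - (n : ℝ) ^ 2)
    with hfdef
  set u : ℕ → ℝ := fun m => 1 / ((m : ℝ) - n) with hudef
  set d : ℕ → ℝ := fun m =>
      (if m = 0 then 1 / (n : ℝ) ^ 2 else 0) + (if m = n then 1 / (4 * (n : ℝ) ^ 2) else 0)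
    with hddef
  -- pointwise decomposition
  have hfg : ∀ m, f m = (1 / (2 * (n:ℝ))) * (u m - u (m + 2 * n)) + d m := by
    intro m
    rcases eq_or_ne m 0 with rfl | hm0
    · have h2n : ((0 + 2 * n : ℕ) : ℝ) = 2 * n := by push_cast; ring
      simp only [hfdef, hudef, hddef, h2n, if_pos (Or.inl rfl), if_pos rfl,
        if_neg (Ne.symm hn.ne'), Nat.cast_zero, add_zero]
      rw [zero_sub]
      field_simp
      rw [if_pos trivial]
      field_simp
      ring
    rcases eq_or_ne m n with heq | hmn
    · rw [heq]
      have h3n : ((n + 2 * n : ℕ) : ℝ) = 3 * n := by push_cast; ring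
      have h0n : n ≠ 0 := hn.ne'
      simp only [hfdef, hudef, hddef, h3n, if_pos (Or.inr rfl), if_pos rfl, if_neg h0n,
        sub_self, div_zero, zero_add, zero_sub]
      field_simp
      rw [if_pos trivial]
      field_simp
      ring
    · have hmn' : (m : ℝ) ≠ n := by exact_mod_cast hmn
      have hsub : (m : ℝ) - n ≠ 0 := sub_ne_zero.mpr hmn'
      have hmpos : (0:ℝ) ≤ m := Nat.cast_nonneg m
      have hadd : (m : ℝ) + n ≠ 0 := by positivity
      have hsq : (m : ℝ) ^ 2 - (n : ℝ) ^ 2 ≠ 0 := by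
        have : (m : ℝ) ^ 2 - (n : ℝ) ^ 2 = ((m:ℝ) - n) * ((m:ℝ) + n) := by ring
        rw [this]; exact mul_ne_zero hsub hadd
      have h2n : ((m + 2 * n : ℕ) : ℝ) - n = (m : ℝ) + n := by push_cast; ring
      simp only [hfdef, hudef, hddef, if_neg (by tauto : ¬(m = 0 ∨ m = n)), if_neg hm0,
        if_neg hmn, h2n, add_zero]
      field_simp
      ring
  -- value of the finite correction sums
  have hd_sum : ∀ M, n + 1 ≤ M → ∑ m ∈ range M, d m = 1 / (n:ℝ)^2 + 1 / (4 * (n:ℝ)^2) := by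
    intro M hM
    have h0 : (0:ℕ) ∈ range M := mem_range.mpr (by omega)
    have hnM : n ∈ range M := mem_range.mpr (by omega)
    rw [hddef, Finset.sum_add_distrib,
      Finset.sum_ite_eq' (range M) 0 (fun _ => 1 / (n:ℝ)^2),
      Finset.sum_ite_eq' (range M) n (fun _ => 1 / (4 * (n:ℝ)^2)),
      if_pos h0, if_pos hnM]
  -- the head sum of u
  have hu0 : u 0 = -(1 / n) := by simp [hudef, Nat.cast_zero, zero_sub, one_div, inv_neg]
  have hu2n : u (2 * n) = 1 / n := by
    have h : ((2 * n : ℕ) : ℝ) - n = n := by push_cast; ring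
    simp only [hudef]
    rw [h]
  have hT : ∑ i ∈ range (2 * n), u i = -(1 / n) := by
    have hrefl := Finset.sum_range_reflect u (2 * n)
    have hpt : ∀ i ∈ range (2 * n), u (2 * n - 1 - i) = -(u (i + 1)) := by
      intro i hi
      have hi' : i < 2 * n := mem_range.mp hi
      have hcast : ((2 * n - 1 - i : ℕ) : ℝ) = 2 * n - 1 - i := by
        have h1 : i ≤ 2 * n - 1 := by omega
        have h2 : 1 ≤ 2 * n := by omega
        push_cast [Nat.cast_sub h1, Nat.cast_sub h2]
        ring
      have hneg : ((2 * n - 1 - i : ℕ) : ℝ) - n = -(((i:ℝ) + 1) - n) := by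
        rw [hcast]; ring
      simp only [hudef]
      rw [hneg]
      push_cast
      rw [one_div, inv_neg, one_div]
    have h2T : (∑ i ∈ range (2 * n), u i) + ∑ i ∈ range (2 * n), u i
        = u 0 - u (2 * n) := by
      calc (∑ i ∈ range (2 * n), u i) + ∑ i ∈ range (2 * n), u i
          = (∑ i ∈ range (2 * n), u i) + ∑ i ∈ range (2 * n), u (2 * n - 1 - i) := by
            rw [hrefl]
        _ = ∑ i ∈ range (2 * n), (u i + u (2 * n - 1 - i)) := by
            rw [Finset.sum_add_distrib]
        _ = ∑ i ∈ range (2 * n), (u i - u (i + 1)) := by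
            refine Finset.sum_congr rfl fun i hi => ?_
            rw [hpt i hi]; ring
        _ = u 0 - u (2 * n) := Finset.sum_range_sub' u (2 * n)
    rw [hu0, hu2n] at h2T
    linarith
  -- partial sums
  have hpart : ∀ M, ∑ m ∈ range M, f m
      = (1 / (2 * (n:ℝ))) * ((∑ i ∈ range (2 * n), u i) - ∑ i ∈ range (2 * n), u (M + i))
        + ∑ m ∈ range M, d m := by
    intro M
    have hAB : (∑ m ∈ range M, u m) - ∑ m ∈ range M, u (m + 2 * n)
        = (∑ i ∈ range (2 * n), u i) - ∑ i ∈ range (2 * n), u (M + i) := by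
      have h1 := Finset.sum_range_add u M (2 * n)
      have h2 := Finset.sum_range_add u (2 * n) M
      have h3 : ∑ m ∈ range M, u (m + 2 * n) = ∑ m ∈ range M, u (2 * n + m) := by
        refine Finset.sum_congr rfl fun i _ => ?_
        rw [add_comm]
      have h4 : (2 * n : ℕ) + M = M + 2 * n := by omega
      rw [h4] at h2
      rw [h3]
      linarith [h1, h2]
    calc ∑ m ∈ range M, f m
        = ∑ m ∈ range M, ((1 / (2 * (n:ℝ))) * (u m - u (m + 2 * n)) + d m) :=
          Finset.sum_congr rfl fun m _ => hfg m
      _ = (1 / (2 * (n:ℝ))) * ((∑ m ∈ range M, u m) - ∑ m ∈ range M, u (m + 2 * n))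
            + ∑ m ∈ range M, d m := by
          rw [Finset.sum_add_distrib, ← Finset.mul_sum, Finset.sum_sub_distrib]
      _ = _ := by rw [hAB]
  -- the tail term tends to 0
  have hE : Tendsto (fun M => ∑ i ∈ range (2 * n), u (M + i)) atTop (𝓝 0) := by
    have : Tendsto (fun M => ∑ i ∈ range (2 * n), u (M + i)) atTop
        (𝓝 (∑ _i ∈ range (2 * n), (0:ℝ))) := by
      refine tendsto_finset_sum _ fun i _ => ?_
      have h1 : Tendsto (fun M : ℕ => ((M : ℝ) + i - n)) atTop atTop := by
        have := tendsto_natCast_atTop_atTop (R := ℝ)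
        exact Filter.tendsto_atTop_add_const_right atTop ((i : ℝ) - n)
          (by simpa using this) |>.congr (fun M => by ring)
      have := h1.inv_tendsto_atTop
      refine this.congr fun M => ?_
      simp only [Pi.inv_apply, hudef, one_div, inv_inj]
      push_cast
      ring
    simpa using this
  -- correction sums tend to their eventual value
  have hD : Tendsto (fun M => ∑ m ∈ range M, d m) atTop
      (𝓝 (1 / (n:ℝ)^2 + 1 / (4 * (n:ℝ)^2))) :=
    tendsto_atTop_of_eventually_const (i₀ := n + 1) hd_sum
  -- the limit of partial sums
  have htend : Tendsto (fun M => ∑ m ∈ range M, f m) atTop (𝓝 (3 / (4 * (n:ℝ)^2))) := by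
    have h1 : Tendsto (fun M => (1 / (2 * (n:ℝ)))
          * ((∑ i ∈ range (2 * n), u i) - ∑ i ∈ range (2 * n), u (M + i))
          + ∑ m ∈ range M, d m) atTop
        (𝓝 ((1 / (2 * (n:ℝ))) * ((-(1/(n:ℝ))) - 0)
          + (1 / (n:ℝ)^2 + 1 / (4 * (n:ℝ)^2)))) := by
      refine Tendsto.add (Tendsto.const_mul _ (Tendsto.sub ?_ hE)) hD
      rw [hT]; exact tendsto_const_nhds
    have hval : (1 / (2 * (n:ℝ))) * ((-(1/(n:ℝ))) - 0)
        + (1 / (n:ℝ)^2 + 1 / (4 * (n:ℝ)^2)) = 3 / (4 * (n:ℝ)^2) := by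
      field_simp
      ring
    rw [hval] at h1
    exact h1.congr fun M => (hpart M).symm
  -- summability
  have hsum : Summable f := by
    rw [← summable_nat_add_iff (n + 1)]
    have hpos : ∀ m : ℕ, 0 ≤ f (m + (n + 1)) := by
      intro m
      have h1 : ¬(m + (n + 1) = 0 ∨ m + (n + 1) = n) := by omega
      simp only [hfdef, if_neg h1]
      have : (0:ℝ) < ((m + (n+1) : ℕ) : ℝ)^2 - (n:ℝ)^2 := by
        have hlt : (n:ℝ) < ((m + (n+1) : ℕ) : ℝ) := by exact_mod_cast (by omega : n < m + (n+1))
        nlinarith [hnpos]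
      positivity
    have hle : ∀ m : ℕ, f (m + (n + 1)) ≤ 1 / ((m:ℝ) + 1) ^ 2 := by
      intro m
      have h1 : ¬(m + (n + 1) = 0 ∨ m + (n + 1) = n) := by omega
      simp only [hfdef, if_neg h1]
      have hcast : ((m + (n+1) : ℕ) : ℝ) = (m:ℝ) + n + 1 := by push_cast; ring
      rw [hcast]
      have hden : ((m:ℝ) + 1)^2 ≤ ((m:ℝ) + n + 1)^2 - (n:ℝ)^2 := by nlinarith [Nat.cast_nonneg (α := ℝ) m]
      have hdpos : (0:ℝ) < ((m:ℝ)+1)^2 := by positivity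
      exact one_div_le_one_div_of_le hdpos hden
    have hbase : Summable (fun m : ℕ => 1 / ((m:ℝ) + 1) ^ 2) := by
      have h2 : Summable (fun m : ℕ => 1 / ((m:ℝ)) ^ 2) := by
        exact_mod_cast Real.summable_one_div_nat_pow.mpr one_lt_two
      have := (summable_nat_add_iff 1).mpr h2
      exact this.congr fun m => by push_cast; ring_nf
    exact Summable.of_nonneg_of_le hpos hle hbase
  have hhs := hsum.hasSum
  have h2 := hhs.tendsto_sum_nat
  rwa [tendsto_nhds_unique h2 htend] at hhs
end

section
/- For every positive integer n, the series ∑_{m=1, m≠n}^∞ 1/(m(m² − n²)) converges and equals 5/(4n³) − H_n/n², where H_n = 1 + 1/2 + ⋯ + 1/n is the n-th harmonic number. -/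
open Finset Filter Topology

private lemma harmonic_cast (n : ℕ) :
    (harmonic n : ℝ) = ∑ i ∈ Finset.range n, (1:ℝ)/(i+1) := by
  rw [harmonic]; push_cast; simp [one_div]

private lemma key1 (n : ℕ) (hn : 0 < n) :
    HasSum (fun k : ℕ => (1:ℝ)/(((k:ℝ)+1)*((k:ℝ)+1+n)))
      ((harmonic n : ℝ)/n) := by
  have hn' : (0:ℝ) < n := by exact_mod_cast hn
  -- summability
  have hs2 : Summable (fun k : ℕ => (1:ℝ)/((k:ℝ)+1)^2) := by
    have h := Real.summable_one_div_nat_pow (p := 2) |>.2 (by norm_num)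
    have := (summable_nat_add_iff (f := fun k : ℕ => (1:ℝ)/(k:ℝ)^2) 1).2 h
    exact this.congr (fun k => by push_cast; ring)
  have hsum : Summable (fun k : ℕ => (1:ℝ)/(((k:ℝ)+1)*((k:ℝ)+1+n))) := by
    refine Summable.of_nonneg_of_le (fun k => by positivity) (fun k => ?_) hs2
    have h1 : (0:ℝ) < (k:ℝ)+1 := by positivity
    rw [div_le_div_iff₀ (by positivity) (by positivity)]
    nlinarith
  -- partial sums formula
  have hps : ∀ K : ℕ, ∑ k ∈ range K, (1:ℝ)/(((k:ℝ)+1)*((k:ℝ)+1+n))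
      = (1/n) * ∑ i ∈ range n, ((1:ℝ)/((i:ℝ)+1) - 1/((K:ℝ)+(i:ℝ)+1)) := by
    intro K
    induction K with
    | zero => simp
    | succ K ih =>
      rw [Finset.sum_range_succ, ih]
      have htel : ∑ i ∈ range n,
          ((1:ℝ)/((K:ℝ)+(i:ℝ)+1) - 1/((K:ℝ)+((i:ℝ)+1)+1))
          = 1/((K:ℝ)+1) - 1/((K:ℝ)+(n:ℝ)+1) := by
        have := Finset.sum_range_sub' (fun i : ℕ => (1:ℝ)/((K:ℝ)+(i:ℝ)+1)) n
        simpa using this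
      have hKc : ((K+1 : ℕ) : ℝ) = (K:ℝ)+1 := by push_cast; ring
      rw [hKc]
      have hsplit : ∀ i ∈ range n,
          (1:ℝ)/((i:ℝ)+1) - 1/(((K:ℝ)+1)+(i:ℝ)+1)
          = ((1:ℝ)/((i:ℝ)+1) - 1/((K:ℝ)+(i:ℝ)+1))
            + ((1:ℝ)/((K:ℝ)+(i:ℝ)+1) - 1/((K:ℝ)+((i:ℝ)+1)+1)) := by
        intro i _; ring_nf
      rw [Finset.sum_congr rfl hsplit, Finset.sum_add_distrib, htel, mul_add]
      have h1 : (0:ℝ) < (K:ℝ)+1 := by positivity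
      have h2 : (0:ℝ) < (K:ℝ)+(n:ℝ)+1 := by positivity
      field_simp
      ring
  -- limit
  have h0 : ∀ i : ℕ, Tendsto (fun K : ℕ => (1:ℝ)/((K:ℝ)+(i:ℝ)+1)) atTop (𝓝 0) := by
    intro i
    have h := (tendsto_one_div_add_atTop_nhds_zero_nat (𝕜 := ℝ)).comp (tendsto_add_atTop_nat i)
    refine h.congr (fun K => ?_)
    simp only [Function.comp]
    push_cast; ring_nf
  have hsumt : Tendsto (fun K : ℕ => (1/(n:ℝ)) * ∑ i ∈ range n, ((1:ℝ)/((i:ℝ)+1) - 1/((K:ℝ)+(i:ℝ)+1)))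
      atTop (𝓝 ((1/(n:ℝ)) * ∑ i ∈ range n, ((1:ℝ)/((i:ℝ)+1) - 0))) :=
    (tendsto_finset_sum _ (fun i _ => tendsto_const_nhds.sub (h0 i))).const_mul _
  have hval : (1/(n:ℝ)) * ∑ i ∈ range n, ((1:ℝ)/((i:ℝ)+1) - 0) = (harmonic n : ℝ)/n := by
    rw [harmonic_cast]; simp only [sub_zero]; ring
  rw [hval] at hsumt
  have htend : Tendsto (fun K : ℕ => ∑ k ∈ range K, (1:ℝ)/(((k:ℝ)+1)*((k:ℝ)+1+n)))
      atTop (𝓝 ((harmonic n : ℝ)/n)) :=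
    hsumt.congr (fun K => (hps K).symm)
  have hhs := hsum.hasSum
  rwa [tendsto_nhds_unique hhs.tendsto_sum_nat htend] at hhs


open scoped BigOperators

set_option maxHeartbeats 1000000 in
/-- For every positive integer `n`, the series `∑_{m ≥ 1, m ≠ n} 1/(m(m² − n²))`
converges and its sum equals `5/(4n³) − H_n/n²`, where `H_n` is the n-th harmonic number. -/
theorem sum_one_div_mul_sq_sub_sq (n : ℕ) (hn : 0 < n) :
    HasSum (fun m : ℕ => if m = 0 ∨ m = n then 0
        else 1 / ((m : ℝ) * ((m : ℝ) ^ 2 - (n : ℝ) ^ 2)))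
      (5 / (4 * (n : ℝ) ^ 3) - (harmonic n : ℝ) / (n : ℝ) ^ 2) := by
  obtain ⟨N, rfl⟩ : ∃ N, n = N + 1 := ⟨n - 1, (Nat.succ_pred_eq_of_pos hn).symm⟩
  have hnr : (0:ℝ) < (N:ℝ)+1 := by positivity
  have hnr' : ((N:ℝ)+1) ≠ 0 := ne_of_gt hnr
  set H : ℝ := (harmonic (N+1) : ℝ) with hH
  -- series d1
  have hd1 : HasSum (fun k : ℕ => (1:ℝ)/(((k:ℝ)+1)*((k:ℝ)+1+((N:ℝ)+1))))
      (H/((N:ℝ)+1)) := by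
    have := key1 (N+1) (Nat.succ_pos N)
    push_cast at this
    exact this
  set C : ℝ := ∑ i ∈ range (N+1), (1:ℝ)/(((i:ℝ)+1)*((i:ℝ)+1+((N:ℝ)+1))) with hC
  -- shifted series d2
  have hd2 : HasSum (fun k : ℕ => (1:ℝ)/(((k:ℝ)+(N:ℝ)+1+1)*((k:ℝ)+(N:ℝ)+1+1+((N:ℝ)+1))))
      (H/((N:ℝ)+1) - C) := by
    have h := (hasSum_nat_add_iff
        (f := fun k : ℕ => (1:ℝ)/(((k:ℝ)+1)*((k:ℝ)+1+((N:ℝ)+1)))) (N+1)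
        (g := H/((N:ℝ)+1) - C)).mpr (by rwa [sub_add_cancel])
    refine h.congr_fun fun k => ?_
    push_cast
    ring_nf
  -- high part
  set fH : ℕ → ℝ := fun m => if N+2 ≤ m then 1/((m:ℝ)*((m:ℝ)^2-((N:ℝ)+1)^2)) else 0 with hfHdef
  have hshift : ∀ k : ℕ, fH (k + (N+2)) =
      (1/(2*((N:ℝ)+1))) * ((1:ℝ)/(((k:ℝ)+1)*((k:ℝ)+1+((N:ℝ)+1)))
        - (1:ℝ)/(((k:ℝ)+(N:ℝ)+1+1)*((k:ℝ)+(N:ℝ)+1+1+((N:ℝ)+1)))) := by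
    intro k
    have hc : N+2 ≤ k+(N+2) := le_add_self
    simp only [hfHdef, if_pos hc]
    have h1 : ((k:ℝ)+1) ≠ 0 := by positivity
    have h2 : ((k:ℝ)+(N:ℝ)+2) ≠ 0 := by positivity
    have h3 : ((k:ℝ)+2*(N:ℝ)+3) ≠ 0 := by positivity
    have h4 : ((k:ℝ)+((N:ℝ)+2))^2 - ((N:ℝ)+1)^2 ≠ 0 := by
      have : ((k:ℝ)+((N:ℝ)+2))^2 - ((N:ℝ)+1)^2 = ((k:ℝ)+1)*((k:ℝ)+2*(N:ℝ)+3) := by ring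
      rw [this]; positivity
    have h2' : ((k:ℝ)+((N:ℝ)+2)) ≠ 0 := by positivity
    push_cast
    field_simp
    ring
  have hfHsum : HasSum fH ((1/(2*((N:ℝ)+1))) * C) := by
    have hsub := (hd1.sub hd2).mul_left (1/(2*((N:ℝ)+1)))
    have : H/((N:ℝ)+1) - (H/((N:ℝ)+1) - C) = C := by ring
    rw [this] at hsub
    have h := (hasSum_nat_add_iff (f := fH) (N+2)
        (g := (1/(2*((N:ℝ)+1))) * C)).mp ((hsub.congr_fun fun k => hshift k))
    have hz : ∑ i ∈ range (N+2), fH i = 0 := by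
      apply Finset.sum_eq_zero
      intro i hi
      rw [Finset.mem_range] at hi
      simp only [hfHdef]
      rw [if_neg (by omega)]
    rwa [hz, add_zero] at h
  -- low part
  set fL : ℕ → ℝ := fun m => if 1 ≤ m ∧ m ≤ N then 1/((m:ℝ)*((m:ℝ)^2-((N:ℝ)+1)^2)) else 0
    with hfLdef
  have hfLsum : HasSum fL (∑ m ∈ range (N+1), fL m) := by
    apply hasSum_sum_of_ne_finset_zero
    intro m hm
    rw [Finset.mem_range, not_lt] at hm
    simp only [hfLdef]
    rw [if_neg (by omega)]
  -- combine
  have hsplit : ∀ m : ℕ, (if m = 0 ∨ m = N+1 then (0:ℝ)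
      else 1 / ((m : ℝ) * ((m : ℝ) ^ 2 - ((N+1 : ℕ) : ℝ) ^ 2))) = fL m + fH m := by
    intro m
    simp only [hfLdef, hfHdef]
    rcases Nat.lt_or_ge m (N+2) with hm | hm
    · rcases Nat.eq_zero_or_pos m with rfl | hm0
      · norm_num
      · rcases Nat.lt_or_ge m (N+1) with hm1 | hm1
        · rw [if_neg (by omega), if_pos ⟨hm0, by omega⟩, if_neg (by omega)]
          push_cast; ring
        · have : m = N+1 := by omega
          subst this
          rw [if_pos (Or.inr rfl), if_neg (by omega), if_neg (by omega)]
          norm_num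
    · rw [if_neg (by omega), if_neg (by omega), if_pos hm]
      push_cast; ring
  have htotal := hfLsum.add hfHsum
  rw [show (fun m => fL m + fH m) = _ from (funext fun m => (hsplit m).symm)] at htotal
  -- it remains to compute the value
  convert htotal using 1
  -- final arithmetic
  set A : ℝ := ∑ i ∈ range N, (1:ℝ)/((i:ℝ)+1) with hA
  set B : ℝ := ∑ i ∈ range (2*N+1), (1:ℝ)/((i:ℝ)+1) with hB
  have hS1 : ∑ i ∈ range (N+1), (1:ℝ)/((i:ℝ)+1) = A + 1/((N:ℝ)+1) := by
    rw [Finset.sum_range_succ]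
  have hS2 : ∑ i ∈ range (2*N+2), (1:ℝ)/((i:ℝ)+1) = B + 1/(2*(N:ℝ)+2) := by
    have h2 : 2*N+2 = (2*N+1)+1 := rfl
    rw [h2, Finset.sum_range_succ]
    push_cast; ring
  have hHA : H = A + 1/((N:ℝ)+1) := by rw [hH, harmonic_cast, hS1]
  -- evaluate C
  have hU : ∑ i ∈ range (N+1), (1:ℝ)/(((N:ℝ)+1)+(i:ℝ)+1)
      = (B + 1/(2*(N:ℝ)+2)) - (A + 1/((N:ℝ)+1)) := by
    have hadd := Finset.sum_range_add (fun i : ℕ => (1:ℝ)/((i:ℝ)+1)) (N+1) (N+1)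
    have h2 : (N+1)+(N+1) = 2*N+2 := by omega
    rw [h2, hS2, hS1] at hadd
    have h3 : ∑ x ∈ range (N+1), (1:ℝ)/(((N+1+x : ℕ):ℝ)+1)
        = ∑ x ∈ range (N+1), (1:ℝ)/(((N:ℝ)+1)+(x:ℝ)+1) :=
      Finset.sum_congr rfl (fun x _ => by push_cast; ring_nf)
    rw [h3] at hadd
    linarith
  have hCpt : ∀ i ∈ range (N+1), (1:ℝ)/(((i:ℝ)+1)*((i:ℝ)+1+((N:ℝ)+1)))
      = (1/((N:ℝ)+1)) * ((1:ℝ)/((i:ℝ)+1) - 1/(((N:ℝ)+1)+(i:ℝ)+1)) := by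
    intro i _
    have h1 : ((i:ℝ)+1) ≠ 0 := by positivity
    have h2 : ((N:ℝ)+1+(i:ℝ)+1) ≠ 0 := by positivity
    have h2' : ((i:ℝ)+1+((N:ℝ)+1)) ≠ 0 := by positivity
    have hcomm : ((N:ℝ)+1+(i:ℝ)+1) = (i:ℝ)+1+((N:ℝ)+1) := by ring
    rw [hcomm]
    field_simp
    ring
  have hCval : C = (1/((N:ℝ)+1)) * ((A + 1/((N:ℝ)+1))
      - ((B + 1/(2*(N:ℝ)+2)) - (A + 1/((N:ℝ)+1)))) := by
    rw [hC, Finset.sum_congr rfl hCpt, ← Finset.mul_sum, Finset.sum_sub_distrib, hS1, hU]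
  -- evaluate the low sum
  have hSL : ∑ m ∈ range (N+1), fL m
      = ∑ i ∈ range N, (1:ℝ)/(((i:ℝ)+1)*(((i:ℝ)+1)^2-((N:ℝ)+1)^2)) := by
    rw [Finset.sum_range_succ' (fun m => fL m) N]
    have h0 : fL 0 = 0 := by simp only [hfLdef]; rw [if_neg (by omega)]
    rw [h0, add_zero]
    refine Finset.sum_congr rfl fun i hi => ?_
    rw [Finset.mem_range] at hi
    simp only [hfLdef]
    rw [if_pos ⟨by omega, by omega⟩]
    push_cast; ring_nf
  have hR : ∑ i ∈ range N, (1:ℝ)/((N:ℝ)-(i:ℝ)) = A := by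
    rw [hA, ← Finset.sum_range_reflect (fun i : ℕ => (1:ℝ)/((i:ℝ)+1)) N]
    refine Finset.sum_congr rfl fun j hj => ?_
    rw [Finset.mem_range] at hj
    congr 1
    have h1 : N - 1 - j = N - (j+1) := by omega
    rw [h1, Nat.cast_sub (by omega)]
    push_cast; ring
  have hT : ∑ i ∈ range N, (1:ℝ)/(((N:ℝ)+1)+(i:ℝ)+1)
      = B - (A + 1/((N:ℝ)+1)) := by
    have hadd := Finset.sum_range_add (fun i : ℕ => (1:ℝ)/((i:ℝ)+1)) (N+1) N
    have h2 : (N+1)+N = 2*N+1 := by omega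
    rw [h2, hS1, ← hB] at hadd
    have h3 : ∑ x ∈ range N, (1:ℝ)/(((N+1+x : ℕ):ℝ)+1)
        = ∑ x ∈ range N, (1:ℝ)/(((N:ℝ)+1)+(x:ℝ)+1) :=
      Finset.sum_congr rfl (fun x _ => by push_cast; ring_nf)
    rw [h3] at hadd
    linarith
  have hlow_pt : ∀ i ∈ range N, (1:ℝ)/(((i:ℝ)+1)*(((i:ℝ)+1)^2-((N:ℝ)+1)^2))
      = -(1/(2*((N:ℝ)+1)^2)) * (2*((1:ℝ)/((i:ℝ)+1)) + 1/((N:ℝ)-(i:ℝ))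
        - 1/(((N:ℝ)+1)+(i:ℝ)+1)) := by
    intro i hi
    rw [Finset.mem_range] at hi
    have hi' : (i:ℝ) + 1 ≤ (N:ℝ) := by exact_mod_cast Nat.succ_le_of_lt hi
    have h1 : ((i:ℝ)+1) ≠ 0 := by positivity
    have h2 : ((N:ℝ)-(i:ℝ)) ≠ 0 := by intro h; nlinarith
    have h3 : ((N:ℝ)+1+((i:ℝ)+1)) ≠ 0 := by positivity
    have h4 : (((i:ℝ)+1)^2-((N:ℝ)+1)^2) ≠ 0 := by
      have : (((i:ℝ)+1)^2-((N:ℝ)+1)^2) = -(((N:ℝ)-(i:ℝ))*((N:ℝ)+1+((i:ℝ)+1))) := by ring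
      rw [this]
      intro h
      rcases mul_eq_zero.mp (neg_eq_zero.mp h) with h | h
      exacts [h2 h, h3 h]
    field_simp
    ring
  have hSLval : ∑ m ∈ range (N+1), fL m
      = -(1/(2*((N:ℝ)+1)^2)) * (2*A + A - (B - (A + 1/((N:ℝ)+1)))) := by
    rw [hSL, Finset.sum_congr rfl hlow_pt, ← Finset.mul_sum, Finset.sum_sub_distrib,
      Finset.sum_add_distrib, ← Finset.mul_sum, hR, hT, ← hA]
  rw [hSLval, hCval, hH]  -- may fail, iterate
  rw [show (harmonic (N+1) : ℝ) = A + 1/((N:ℝ)+1) from hHA]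
  push_cast
  field_simp
  ring
end

section
/- The zeroth Fourier cosine coefficient of x·Cl₂(2πx) on (0,1) satisfies 2·∫₀¹ x·Cl₂(2πx) dx = −ζ(3)/π, where Cl₂(θ) = ∑_{k=1}^∞ sin(kθ)/k² is the Clausen function. -/
open Real MeasureTheory

lemma integral_x_sin (k : ℕ) :
    ∫ x in (0:ℝ)..1, x * Real.sin (((k : ℝ) + 1) * (2 * π * x)) =
      -1 / (2 * π * ((k : ℝ) + 1)) := by
  set a : ℝ := 2 * π * ((k : ℝ) + 1) with ha
  have ha0 : a ≠ 0 := by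
    have : (0:ℝ) < 2 * π * ((k : ℝ) + 1) := by positivity
    simpa [ha] using this.ne'
  have harg : ∀ x : ℝ, ((k : ℝ) + 1) * (2 * π * x) = a * x := by intro x; rw [ha]; ring
  have hderiv : ∀ x ∈ Set.uIcc (0:ℝ) 1,
      HasDerivAt (fun x : ℝ => Real.sin (a * x) / a ^ 2 - x * Real.cos (a * x) / a)
        (x * Real.sin (a * x)) x := by
    intro x _
    have h1 : HasDerivAt (fun x : ℝ => a * x) a x := by
      simpa using (hasDerivAt_id x).const_mul a
    have hs : HasDerivAt (fun x : ℝ => Real.sin (a * x)) (Real.cos (a * x) * a) x :=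
      (Real.hasDerivAt_sin (a * x)).comp x h1
    have hc : HasDerivAt (fun x : ℝ => Real.cos (a * x)) (-Real.sin (a * x) * a) x :=
      (Real.hasDerivAt_cos (a * x)).comp x h1
    have hxc : HasDerivAt (fun x : ℝ => x * Real.cos (a * x))
        (1 * Real.cos (a * x) + x * (-Real.sin (a * x) * a)) x :=
      (hasDerivAt_id x).mul hc
    have : HasDerivAt (fun x : ℝ => Real.sin (a * x) / a ^ 2 - x * Real.cos (a * x) / a)
        (Real.cos (a * x) * a / a ^ 2 - (1 * Real.cos (a * x) + x * (-Real.sin (a * x) * a)) / a) x :=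
      ((hs.div_const (a ^ 2)).sub (hxc.div_const a))
    convert this using 1
    field_simp
    ring
  have hcont : IntervalIntegrable (fun x : ℝ => x * Real.sin (a * x)) volume 0 1 :=
    (continuous_id.mul (Real.continuous_sin.comp (continuous_const.mul continuous_id))).intervalIntegrable 0 1
  have := intervalIntegral.integral_eq_sub_of_hasDerivAt hderiv hcont
  simp only [harg]
  rw [this]
  have hsin : Real.sin (a * 1) = 0 := by
    have : a * 1 = ((k + 1 : ℕ) : ℝ) * (2 * π) := by rw [ha]; push_cast; ring
    rw [this]
    have : ((k + 1 : ℕ) : ℝ) * (2 * π) = (2 * (k + 1) : ℕ) * π := by push_cast; ring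
    rw [this, Real.sin_nat_mul_pi]
  have hcos : Real.cos (a * 1) = 1 := by
    have : a * 1 = ((k + 1 : ℕ) : ℝ) * (2 * π) := by rw [ha]; push_cast; ring
    rw [this, Real.cos_nat_mul_two_pi]
  rw [hsin, hcos]
  field_simp
  simp

lemma zeta3_re : (riemannZeta 3).re = ∑' k : ℕ, 1 / ((k : ℝ) + 1) ^ 3 := by
  have h3 : (1:ℝ) < Complex.re 3 := by norm_num
  rw [zeta_eq_tsum_one_div_nat_add_one_cpow h3]
  have heq : ∀ k : ℕ, (1 : ℂ) / ((k : ℂ) + 1) ^ (3:ℂ) = ((1 / ((k : ℝ) + 1) ^ 3 : ℝ) : ℂ) := by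
    intro k
    have : ((3:ℂ)) = ((3:ℕ) : ℂ) := by norm_num
    rw [this, Complex.cpow_natCast]
    push_cast
    ring
  simp only [heq]
  rw [← Complex.ofReal_tsum]
  exact Complex.ofReal_re _

lemma summable_cube : Summable (fun k : ℕ => 1 / ((k : ℝ) + 1) ^ 3) := by
  have := (summable_one_div_nat_pow (p := 3)).mpr (by norm_num)
  have h := this.comp_injective (add_left_injective 1)
  apply h.congr
  intro k
  simp

lemma summable_sq : Summable (fun k : ℕ => 1 / ((k : ℝ) + 1) ^ 2) := by
  have := (summable_one_div_nat_pow (p := 2)).mpr (by norm_num)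
  have h := this.comp_injective (add_left_injective 1)
  apply h.congr
  intro k
  simp

/-- The Clausen function `Cl₂(θ) = ∑_{k=1}^∞ sin(kθ)/k²`. -/
noncomputable def Cl2 (θ : ℝ) : ℝ := ∑' k : ℕ, Real.sin ((k + 1) * θ) / ((k : ℝ) + 1) ^ 2

/-- The zeroth Fourier cosine coefficient of `x·Cl₂(2πx)` on `(0,1)`:
`2·∫₀¹ x·Cl₂(2πx) dx = −ζ(3)/π`. -/
theorem fourier_cos_coeff_zero_x_mul_Cl2 :
    2 * ∫ x in (0:ℝ)..1, x * Cl2 (2 * π * x) = -((riemannZeta 3).re) / π := by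
  set F : ℕ → ℝ → ℝ := fun k x => x * (Real.sin (((k : ℝ) + 1) * (2 * π * x)) / ((k : ℝ) + 1) ^ 2)
    with hF
  have hFcont : ∀ k, Continuous (F k) := by
    intro k
    exact continuous_id.mul ((Real.continuous_sin.comp
      (continuous_const.mul (continuous_const.mul continuous_id))).div_const _)
  have hFint : ∀ k, Integrable (F k) (volume.restrict (Set.Ioc (0:ℝ) 1)) := fun k =>
    (hFcont k).integrableOn_Ioc
  have hbound : ∀ k, (∫ x in Set.Ioc (0:ℝ) 1, ‖F k x‖) ≤ 1 / ((k : ℝ) + 1) ^ 2 := by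
    intro k
    have h1 : (∫ x in Set.Ioc (0:ℝ) 1, ‖F k x‖) ≤
        ∫ _x in Set.Ioc (0:ℝ) 1, 1 / ((k : ℝ) + 1) ^ 2 := by
      apply integral_mono_of_nonneg
      · exact Filter.Eventually.of_forall fun x => norm_nonneg _
      · exact integrable_const _
      · filter_upwards [ae_restrict_mem measurableSet_Ioc] with x hx
        rw [hF]
        simp only [norm_mul, Real.norm_eq_abs, abs_div]
        have hx1 : |x| ≤ 1 := by rw [abs_of_pos hx.1]; exact hx.2
        have hs : |Real.sin (((k : ℝ) + 1) * (2 * π * x))| ≤ 1 := Real.abs_sin_le_one _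
        rw [abs_of_pos (show (0:ℝ) < ((k : ℝ) + 1) ^ 2 by positivity)]
        calc |x| * (|Real.sin (((k : ℝ) + 1) * (2 * π * x))| / ((k : ℝ) + 1) ^ 2)
            ≤ 1 * (1 / ((k : ℝ) + 1) ^ 2) := by gcongr
          _ = 1 / ((k : ℝ) + 1) ^ 2 := one_mul _
    simpa using h1
  have hsum : Summable fun k => ∫ x in Set.Ioc (0:ℝ) 1, ‖F k x‖ :=
    Summable.of_nonneg_of_le (fun k => integral_nonneg fun x => norm_nonneg _) hbound summable_sq
  have hswap := integral_tsum_of_summable_integral_norm hFint hsum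
  have hCl : ∀ x : ℝ, x * Cl2 (2 * π * x) = ∑' k, F k x := by
    intro x
    rw [Cl2, ← tsum_mul_left]
  have hint : ∫ x in (0:ℝ)..1, x * Cl2 (2 * π * x) = ∑' k, ∫ x in (0:ℝ)..1, F k x := by
    rw [intervalIntegral.integral_of_le zero_le_one]
    simp only [hCl]
    rw [← hswap]
    congr 1
    ext k
    rw [intervalIntegral.integral_of_le zero_le_one]
  rw [hint]
  have hval : ∀ k : ℕ, ∫ x in (0:ℝ)..1, F k x = -(1 / (2 * π)) * (1 / ((k : ℝ) + 1) ^ 3) := by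
    intro k
    have : ∫ x in (0:ℝ)..1, F k x =
        (1 / ((k : ℝ) + 1) ^ 2) * ∫ x in (0:ℝ)..1, x * Real.sin (((k : ℝ) + 1) * (2 * π * x)) := by
      rw [← intervalIntegral.integral_const_mul]
      congr 1
      ext x
      rw [hF]
      ring
    rw [this, integral_x_sin k]
    have hk : ((k : ℝ) + 1) ≠ 0 := by positivity
    have hπ : π ≠ 0 := Real.pi_ne_zero
    field_simp
  simp only [hval]
  rw [tsum_mul_left, zeta3_re]
  field_simp
end
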